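/- Let f:(0,∞)→(0,∞) be AG-convex (hence convex) and g(x,y)=y f(x/y). Then for all a,b,x,y>0 and α∈[0,1]: g(αa+(1-α)b, αx+(1-α)y) ≤ [αg(a,x)+(1-α)g(a,y)]^α · [αg(b,x)+(1-α)g(b,y)]^{1-α}. -/

import Mathlib

theorem perspective_ag (f : ℝ → ℝ) (hf : ∀ x ∈ Set.Ioi (0:ℝ), 0 < f x)
    (hAG : ∀ u ∈ Set.Ioi (0:ℝ), ∀ v ∈ Set.Ioi (0:ℝ), ∀ α ∈ Set.Icc (0:ℝ) 1,
      f (α * u + (1 - α) * v) ≤ f u ^ α * f v ^ (1 - α))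
    (g : ℝ → ℝ → ℝ) (hg : ∀ x y : ℝ, g x y = y * f (x / y)) :
    ∀ a ∈ Set.Ioi (0:ℝ), ∀ b ∈ Set.Ioi (0:ℝ), ∀ x ∈ Set.Ioi (0:ℝ), ∀ y ∈ Set.Ioi (0:ℝ),
      ∀ α ∈ Set.Icc (0:ℝ) 1,
      g (α * a + (1 - α) * b) (α * x + (1 - α) * y) ≤
        (α * g a x + (1 - α) * g a y) ^ α * (α * g b x + (1 - α) * g b y) ^ (1 - α) := by
  intro a ha b hb x hx y hy α hα
  simp only [Set.mem_Ioi] at ha hb hx hy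
  obtain ⟨hα0, hα1⟩ := hα
  have hα1' : (0:ℝ) ≤ 1 - α := by linarith
  set s := α * x + (1 - α) * y with hs
  have hspos : 0 < s := by
    rcases eq_or_lt_of_le hα0 with h | h
    · simp [hs, ← h]; linarith
    · have : 0 < α * x := mul_pos h hx
      nlinarith [mul_nonneg hα1' hy.le]
  -- convexity of g in second argument
  have key : ∀ c : ℝ, 0 < c → g c s ≤ α * g c x + (1 - α) * g c y := by
    intro c hc
    have hβ0 : 0 ≤ α * x / s := by positivity
    have hβsum : α * x / s + (1 - α) * y / s = 1 := by
      field_simp; exact hs.symm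
    have hfx := hf _ (Set.mem_Ioi.2 (div_pos hc hx))
    have hfy := hf _ (Set.mem_Ioi.2 (div_pos hc hy))
    have hcs : c / s = (α * x / s) * (c / x) + (1 - α) * y / s * (c / y) := by
      field_simp; ring
    have h1 : f (c / s) ≤ f (c / x) ^ (α * x / s) * f (c / y) ^ ((1 - α) * y / s) := by
      rw [hcs]
      have := hAG _ (Set.mem_Ioi.2 (div_pos hc hx)) _ (Set.mem_Ioi.2 (div_pos hc hy))
        (α * x / s) ⟨hβ0, by nlinarith [mul_nonneg hα1' hy.le, div_nonneg (mul_nonneg hα1' hy.le) hspos.le]⟩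
      have he : 1 - α * x / s = (1 - α) * y / s := by linarith
      rw [he] at this
      exact this
    have h2 : f (c / x) ^ (α * x / s) * f (c / y) ^ ((1 - α) * y / s) ≤
        (α * x / s) * f (c / x) + ((1 - α) * y / s) * f (c / y) :=
      Real.geom_mean_le_arith_mean2_weighted hβ0 (by positivity) hfx.le hfy.le hβsum
    have h3 : f (c / s) ≤ (α * x / s) * f (c / x) + ((1 - α) * y / s) * f (c / y) :=
      h1.trans h2
    rw [hg, hg, hg]
    calc s * f (c / s) ≤ s * ((α * x / s) * f (c / x) + ((1 - α) * y / s) * f (c / y)) := by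
          exact mul_le_mul_of_nonneg_left h3 hspos.le
      _ = α * (x * f (c / x)) + (1 - α) * (y * f (c / y)) := by field_simp
  -- main AG step
  have hfa := hf _ (Set.mem_Ioi.2 (div_pos ha hspos))
  have hfb := hf _ (Set.mem_Ioi.2 (div_pos hb hspos))
  have hmain : g (α * a + (1 - α) * b) s ≤ g a s ^ α * g b s ^ (1 - α) := by
    rw [hg, hg, hg]
    have hdiv : (α * a + (1 - α) * b) / s = α * (a / s) + (1 - α) * (b / s) := by
      field_simp
    have hAGm := hAG _ (Set.mem_Ioi.2 (div_pos ha hspos)) _ (Set.mem_Ioi.2 (div_pos hb hspos))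
      α ⟨hα0, hα1⟩
    rw [hdiv] at *
    calc s * f (α * (a / s) + (1 - α) * (b / s))
        ≤ s * (f (a / s) ^ α * f (b / s) ^ (1 - α)) :=
          mul_le_mul_of_nonneg_left hAGm hspos.le
      _ = (s * f (a / s)) ^ α * (s * f (b / s)) ^ (1 - α) := by
          have hss : s ^ α * s ^ (1 - α) = s := by
            rw [← Real.rpow_add hspos]; simp
          rw [Real.mul_rpow hspos.le hfa.le, Real.mul_rpow hspos.le hfb.le]
          linear_combination (f (a / s) ^ α * f (b / s) ^ (1 - α)) * hss.symm
  have hgas : 0 < g a s := by rw [hg]; positivity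
  have hgbs : 0 < g b s := by rw [hg]; positivity
  have hka := key a ha
  have hkb := key b hb
  calc g (α * a + (1 - α) * b) s ≤ g a s ^ α * g b s ^ (1 - α) := hmain
    _ ≤ (α * g a x + (1 - α) * g a y) ^ α * (α * g b x + (1 - α) * g b y) ^ (1 - α) := by
        apply mul_le_mul (Real.rpow_le_rpow hgas.le hka hα0)
          (Real.rpow_le_rpow hgbs.le hkb hα1')
          (Real.rpow_nonneg hgbs.le _) (Real.rpow_nonneg (le_trans hgas.le hka) _)
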